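/- Let H be a complex Hilbert space, U ⊆ ℂᵐ open, and h : U → (sesquilinear forms on H) a family of inner products with h_t(u,v) = ⟨w(t)u,v⟩ for a smooth map w : U → Aut(H). Fix (t₀, u₀) ∈ U × H and a closed subspace H₀. Define F : U × H × H₀ → H₀ by F(t,u,v) = P₀(w(t₀)⁻¹ w(t)(v−u)), where P₀ is the h_{t₀}-orthogonal projection onto H₀. Then F(t,u,v) = 0 if and only if v is the h_t-orthogonal projection of u onto H₀. -/

import Mathlib

/-- With `h_t(u,v) = ⟪w t u, v⟫` a smooth family of weighted inner products,
`t₀ ∈ U` fixed, `P₀` the `h_{t₀}`-orthogonal projection onto the closed subspace `H₀`, and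
`F(t,u,v) = P₀(w(t₀)⁻¹ w(t)(v − u))`, one has, for `v ∈ H₀`:
`F(t,u,v) = 0` iff `v` is the `h_t`-orthogonal projection of `u` onto `H₀`
(i.e. `⟪w t (u − v), v₀⟫ = 0` for all `v₀ ∈ H₀`). -/
theorem statement_3 {m : ℕ}
    {H : Type*} [NormedAddCommGroup H] [InnerProductSpace ℂ H] [CompleteSpace H]
    (U : Set (Fin m → ℂ)) (hU : IsOpen U)
    (w : (Fin m → ℂ) → H →L[ℂ] H)
    (hw : ContDiffOn ℝ (⊤ : ℕ∞) w U)
    (hwherm : ∀ t ∈ U, ∀ u v : H, (inner ℂ (w t u) v : ℂ) = starRingEnd ℂ (inner ℂ (w t v) u))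
    (hwpos : ∀ t ∈ U, ∃ c C : ℝ, 0 < c ∧ 0 < C ∧ ∀ u : H,
      c * ‖u‖ ^ 2 ≤ (inner ℂ (w t u) u : ℂ).re ∧ (inner ℂ (w t u) u : ℂ).re ≤ C * ‖u‖ ^ 2)
    (t₀ : Fin m → ℂ) (ht₀ : t₀ ∈ U)
    (wi₀ : H →L[ℂ] H) (hwi₀l : ∀ x : H, wi₀ (w t₀ x) = x) (hwi₀r : ∀ x : H, w t₀ (wi₀ x) = x)
    (H₀ : Submodule ℂ H) (hH₀ : IsClosed (H₀ : Set H))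
    (P₀ : H → H) (hP₀mem : ∀ x : H, P₀ x ∈ H₀)
    (hP₀orth : ∀ x : H, ∀ v ∈ H₀, (inner ℂ (w t₀ (x - P₀ x)) v : ℂ) = 0)
    (t : Fin m → ℂ) (ht : t ∈ U) (u v : H) (hv : v ∈ H₀) :
    P₀ (wi₀ (w t (v - u))) = 0 ↔ ∀ v₀ ∈ H₀, (inner ℂ (w t (u - v)) v₀ : ℂ) = 0 := by
  set x := wi₀ (w t (v - u)) with hx
  have key : ∀ v₀ ∈ H₀, (inner ℂ (w t₀ (P₀ x)) v₀ : ℂ) = inner ℂ (w t (v - u)) v₀ := by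
    intro v₀ hv₀
    have h1 := hP₀orth x v₀ hv₀
    have h2 : w t₀ x = w t (v - u) := hwi₀r _
    rw [map_sub, inner_sub_left, sub_eq_zero] at h1
    rw [← h1, h2]
  have hflip : w t (v - u) = -(w t (u - v)) := by rw [← map_neg, neg_sub]
  constructor
  · intro h0 v₀ hv₀
    have hk := key v₀ hv₀
    rw [h0, map_zero, inner_zero_left] at hk
    have h3 : (inner ℂ (w t (v - u)) v₀ : ℂ) = 0 := hk.symm
    rw [hflip, inner_neg_left, neg_eq_zero] at h3
    exact h3
  · intro hall
    obtain ⟨c, C, hc, hC, hb⟩ := hwpos t₀ ht₀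
    have hmem := hP₀mem x
    have h1 := key (P₀ x) hmem
    have h2 : (inner ℂ (w t (v - u)) (P₀ x) : ℂ) = 0 := by
      rw [hflip, inner_neg_left, hall (P₀ x) hmem, neg_zero]
    rw [h2] at h1
    have h3 := (hb (P₀ x)).1
    rw [h1] at h3
    simp only [Complex.zero_re] at h3
    have h5 : ‖P₀ x‖ ^ 2 = 0 := by
      nlinarith [sq_nonneg ‖P₀ x‖, mul_nonneg hc.le (sq_nonneg ‖P₀ x‖)]
    have h4 : ‖P₀ x‖ = 0 := by
      exact pow_eq_zero_iff (by norm_num) |>.mp h5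
    exact norm_eq_zero.mp h4
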